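/- Let a, b, c, d be real constants with ad − bc = 1, and let I be an open interval with cx + d > 0 for all x ∈ I. Let y be a twice differentiable nonvanishing function satisfying y''(u) = y(u)^{−3} for all u in an open set containing {(ax + b)/(cx + d) : x ∈ I}. Define ỹ(x) = (cx + d)·y((ax + b)/(cx + d)) for x ∈ I. Then ỹ is twice differentiable, nonvanishing, and satisfies ỹ''(x) = ỹ(x)^{−3} for all x ∈ I. (This exhibits the three-parameter symmetry group of y'' = y^{−3}, the case A = 0, F = y^{−3} of y'' = A(x)y' + F(y), which is the unique nonlinear case with three-dimensional symmetry algebra.) -/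

import Mathlib

/-- Fractional-linear symmetry of `y'' = y⁻³`.  If
`ad - bc = 1`, `cx + d > 0` on the open interval `I`, and `y` is twice
differentiable, nonvanishing and satisfies `y'' = y⁻³` on an open set `U`
containing `{(ax+b)/(cx+d) : x ∈ I}`, then
`ỹ(x) = (cx + d)·y((ax+b)/(cx+d))` is twice differentiable, nonvanishing
and satisfies `ỹ'' = ỹ⁻³` on `I`. -/
theorem stmt16 (a b c d : ℝ) (habcd : a * d - b * c = 1)
    (p q : ℝ) (I : Set ℝ) (hI : I = Set.Ioo p q)
    (hcd : ∀ x ∈ I, 0 < c * x + d)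
    (y : ℝ → ℝ) (U : Set ℝ) (hU : IsOpen U)
    (himg : ∀ x ∈ I, (a * x + b) / (c * x + d) ∈ U)
    (hy : ∀ u ∈ U, DifferentiableAt ℝ y u)
    (hy' : ∀ u ∈ U, DifferentiableAt ℝ (deriv y) u)
    (hynz : ∀ u ∈ U, y u ≠ 0)
    (hode : ∀ u ∈ U, deriv (deriv y) u = (y u) ^ (-3 : ℤ))
    (Y : ℝ → ℝ) (hY : ∀ x : ℝ, Y x = (c * x + d) * y ((a * x + b) / (c * x + d))) :
    ∀ x ∈ I, DifferentiableAt ℝ Y x ∧ DifferentiableAt ℝ (deriv Y) x ∧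
      Y x ≠ 0 ∧ deriv (deriv Y) x = (Y x) ^ (-3 : ℤ) := by
  subst hI
  set L : ℝ → ℝ := fun t => c * t + d with hLdef
  set w : ℝ → ℝ := fun t => (a * t + b) / L t with hwdef
  have hLne : ∀ z ∈ Set.Ioo p q, L z ≠ 0 := fun z hz => (hcd z hz).ne'
  have hwU : ∀ z ∈ Set.Ioo p q, w z ∈ U := himg
  have hLd : ∀ z : ℝ, HasDerivAt L c z := by
    intro z
    exact (((hasDerivAt_id z).const_mul c).add_const d).congr_deriv (mul_one c)
  have hwderiv : ∀ z ∈ Set.Ioo p q, HasDerivAt w ((L z) ^ 2)⁻¹ z := by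
    intro z hz
    have h1 : HasDerivAt (fun t => a * t + b) a z := by
      simpa using ((hasDerivAt_id z).const_mul a).add_const b
    have h := h1.div (hLd z) (hLne z hz)
    have hnum : a * L z - (a * z + b) * c = 1 := by
      simp only [hLdef]; linear_combination habcd
    rw [hnum] at h
    rw [one_div] at h; exact h
  set g : ℝ → ℝ := fun z => c * y (w z) + deriv y (w z) / L z with hgdef
  have hYd : ∀ z ∈ Set.Ioo p q, HasDerivAt Y (g z) z := by
    intro z hz
    have hyw : HasDerivAt (fun t => y (w t)) (deriv y (w z) * ((L z) ^ 2)⁻¹) z :=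
      ((hy (w z) (hwU z hz)).hasDerivAt).comp z (hwderiv z hz)
    have hprod := (hLd z).mul hyw
    have hYeq : Y = fun t => L t * y (w t) := funext hY
    rw [hYeq]
    refine hprod.congr_deriv ?_
    have := hLne z hz
    show _ = c * y (w z) + deriv y (w z) / L z
    field_simp [hgdef]
  have hderivYg : ∀ z ∈ Set.Ioo p q, deriv Y z = g z := fun z hz => (hYd z hz).deriv
  intro x hx
  have hmem : Set.Ioo p q ∈ nhds x := isOpen_Ioo.mem_nhds hx
  have heq : deriv Y =ᶠ[nhds x] g :=
    Filter.eventuallyEq_of_mem hmem hderivYg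
  have hLx := hLne x hx
  have hUx := hwU x hx
  -- derivative of g at x
  have hywx : HasDerivAt (fun t => y (w t)) (deriv y (w x) * ((L x) ^ 2)⁻¹) x :=
    ((hy (w x) hUx).hasDerivAt).comp x (hwderiv x hx)
  have hy'wx : HasDerivAt (fun t => deriv y (w t)) (deriv (deriv y) (w x) * ((L x) ^ 2)⁻¹) x :=
    ((hy' (w x) hUx).hasDerivAt).comp x (hwderiv x hx)
  have hgd : HasDerivAt g
      (c * (deriv y (w x) * ((L x) ^ 2)⁻¹) +
        ((deriv (deriv y) (w x) * ((L x) ^ 2)⁻¹) * L x - deriv y (w x) * c) / (L x) ^ 2) x :=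
    (hywx.const_mul c).add (hy'wx.div (hLd x) hLx)
  have hYx : Y x = L x * y (w x) := hY x
  have hynzx : y (w x) ≠ 0 := hynz _ hUx
  refine ⟨(hYd x hx).differentiableAt, ?_, ?_, ?_⟩
  · exact (heq.differentiableAt_iff).mpr hgd.differentiableAt
  · rw [hYx]; exact mul_ne_zero hLx hynzx
  · have h1 : deriv (deriv Y) x = deriv g x := heq.deriv_eq
    rw [h1, hgd.deriv, hode _ hUx, hYx]
    have h3 : ∀ r : ℝ, r ^ (-3 : ℤ) = (r ^ 3)⁻¹ := by
      intro r; rw [zpow_neg]; norm_cast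
    rw [h3, h3]
    field_simp
    ring
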